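/- Let A be a Banach algebra, B a Banach A-bimodule, and n ≥ 1. If H¹(A, B⁽ⁿ⁺²⁾) = 0, then H¹(A, B⁽ⁿ⁾) = 0. That is, if every continuous derivation from A into the (n+2)-nd dual of B is inner, then every continuous derivation from A into the n-th dual of B is inner. -/

import Mathlib

open NormedSpace ContinuousLinearMap

set_option maxSynthPendingDepth 2

noncomputable section

section Core

variable (X Y Z : Type*)
  [NormedAddCommGroup X] [NormedSpace ℝ X]
  [NormedAddCommGroup Y] [NormedSpace ℝ Y]
  [NormedAddCommGroup Z] [NormedSpace ℝ Z]

/-- The dual (adjoint) map of a continuous linear map. -/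
def dualMapCLM (T : X →L[ℝ] Y) : StrongDual ℝ Y →L[ℝ] StrongDual ℝ X :=
  (ContinuousLinearMap.compSL X Y ℝ (RingHom.id ℝ) (RingHom.id ℝ)).flip T

variable {X Y Z}

/-- The adjoint of a continuous bilinear map `m : X × Y → Z`, as a bilinear map
`Z* × X → Y*`, `⟨adjBil m z' x, y⟩ = ⟨z', m x y⟩`. -/
def adjBil (m : X →L[ℝ] Y →L[ℝ] Z) : StrongDual ℝ Z →L[ℝ] X →L[ℝ] StrongDual ℝ Y :=
  ((ContinuousLinearMap.compSL X (Y →L[ℝ] Z) (StrongDual ℝ Y) (RingHom.id ℝ) (RingHom.id ℝ)).flip m).comp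
    (ContinuousLinearMap.compSL Y Z ℝ (RingHom.id ℝ) (RingHom.id ℝ))

/-- The first Arens extension of a continuous bilinear map `X × Y → Z`
to the biduals, `X** × Y** → Z**`. -/
def arensExt (m : X →L[ℝ] Y →L[ℝ] Z) :
    StrongDual ℝ (StrongDual ℝ X) →L[ℝ] StrongDual ℝ (StrongDual ℝ Y) →L[ℝ] StrongDual ℝ (StrongDual ℝ Z) :=
  adjBil (adjBil (adjBil m))

variable (E : Type*) [NormedAddCommGroup E] [NormedSpace ℝ E]

/-- The weak-* topology on the bidual `E**`, i.e. the topology of pointwise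
convergence on `E*`. -/
def weakStarTop : TopologicalSpace (StrongDual ℝ (StrongDual ℝ E)) :=
  ⨅ f : StrongDual ℝ E, TopologicalSpace.induced (fun F => F f) inferInstance

/-- The weak topology on the bidual `E**`, i.e. the topology of pointwise
convergence on `E***`. -/
def weakTop : TopologicalSpace (StrongDual ℝ (StrongDual ℝ E)) :=
  ⨅ Φ : StrongDual ℝ (StrongDual ℝ (StrongDual ℝ E)), TopologicalSpace.induced (fun F => Φ F) inferInstance

end Core

section Algebra

variable (A : Type*) [NonUnitalNormedRing A] [NormedSpace ℝ A]
  [IsScalarTower ℝ A A] [SMulCommClass ℝ A A]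

/-- The first Arens product on the bidual of a Banach algebra. -/
def arens1 : StrongDual ℝ (StrongDual ℝ A) →L[ℝ] StrongDual ℝ (StrongDual ℝ A) →L[ℝ] StrongDual ℝ (StrongDual ℝ A) :=
  arensExt (ContinuousLinearMap.mul ℝ A)

/-- The second Arens product on the bidual of a Banach algebra. -/
def arens2 (F G : StrongDual ℝ (StrongDual ℝ A)) : StrongDual ℝ (StrongDual ℝ A) :=
  arensExt ((ContinuousLinearMap.mul ℝ A).flip) G F

/-- The weak left topological center of `A**`: those `F` such that
`G ↦ F □ G` is weak-*-to-weak continuous. -/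
def weakLeftCenter : Set (StrongDual ℝ (StrongDual ℝ A)) :=
  { F | ∀ Φ : StrongDual ℝ (StrongDual ℝ (StrongDual ℝ A)),
      @Continuous _ _ (weakStarTop A) _ fun G => Φ (arens1 A F G) }

/-- The left topological center of `A**`: those `F` such that
`G ↦ F □ G` is weak-*-to-weak-* continuous. -/
def leftCenter : Set (StrongDual ℝ (StrongDual ℝ A)) :=
  { F | ∀ f : StrongDual ℝ A,
      @Continuous _ _ (weakStarTop A) _ fun G => arens1 A F G f }

end Algebra


universe u v

/-- A Banach bimodule over `A`: a normed space together with continuous bilinear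
left and right module actions. -/
structure BBim (A : Type u) [NonUnitalNormedRing A] [NormedSpace ℝ A]
    [IsScalarTower ℝ A A] [SMulCommClass ℝ A A] : Type (max u (v + 1)) where
  X : Type v
  [grp : NormedAddCommGroup X]
  [mod : NormedSpace ℝ X]
  l : A →L[ℝ] X →L[ℝ] X
  r : X →L[ℝ] A →L[ℝ] X

attribute [instance] BBim.grp BBim.mod

variable {A : Type u} [NonUnitalNormedRing A] [NormedSpace ℝ A]
  [IsScalarTower ℝ A A] [SMulCommClass ℝ A A]

/-- The dual of a Banach bimodule, with the dual module actions
`⟨a ⋅ φ, x⟩ = ⟨φ, x ⋅ a⟩` and `⟨φ ⋅ a, x⟩ = ⟨φ, a ⋅ x⟩`. -/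
def BBim.dual (M : BBim.{u, v} A) : BBim.{u, v} A where
  X := StrongDual ℝ M.X
  l := ((ContinuousLinearMap.compSL M.X M.X ℝ (RingHom.id ℝ) (RingHom.id ℝ)).flip).comp M.r.flip
  r := (((ContinuousLinearMap.compSL M.X M.X ℝ (RingHom.id ℝ) (RingHom.id ℝ)).flip).comp M.l).flip

/-- The `n`-th iterated dual `B⁽ⁿ⁾` of a Banach bimodule. -/
def BBim.iter (M : BBim.{u, v} A) : ℕ → BBim.{u, v} A
  | 0 => M
  | n + 1 => (M.iter n).dual

/-- `D : A → X` is a derivation into the bimodule `M`. -/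
def BBim.IsDer (M : BBim.{u, v} A) (D : A →L[ℝ] M.X) : Prop :=
  ∀ a b : A, D (a * b) = M.l a (D b) + M.r (D a) b

/-- `D : A → X` is an inner derivation. -/
def BBim.IsInner (M : BBim.{u, v} A) (D : A →L[ℝ] M.X) : Prop :=
  ∃ x : M.X, ∀ a : A, D a = M.l a x - M.r x a

/-- `H¹(A, X) = 0`: every continuous derivation into `M` is inner. -/
def BBim.H1Zero (M : BBim.{u, v} A) : Prop :=
  ∀ D : A →L[ℝ] M.X, M.IsDer D → M.IsInner D

lemma incl_l (M : BBim.{u, v} A) (a : A) (x : M.X) :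
    inclusionInDoubleDual ℝ M.X (M.l a x)
      = M.dual.dual.l a (inclusionInDoubleDual ℝ M.X x) := rfl

lemma incl_r (M : BBim.{u, v} A) (x : M.X) (a : A) :
    inclusionInDoubleDual ℝ M.X (M.r x a)
      = M.dual.dual.r (inclusionInDoubleDual ℝ M.X x) a := rfl

/-- The canonical projection `N*** → N*`. -/
def Pmap (N : BBim.{u, v} A) : (N.dual.dual.dual).X →L[ℝ] (N.dual).X :=
  dualMapCLM N.X (StrongDual ℝ (StrongDual ℝ N.X)) (inclusionInDoubleDual ℝ N.X)

lemma P_incl (N : BBim.{u, v} A) (ψ : (N.dual).X) :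
    Pmap N (inclusionInDoubleDual ℝ (N.dual).X ψ) = ψ := rfl

lemma P_l (N : BBim.{u, v} A) (a : A) (F : StrongDual ℝ (StrongDual ℝ (StrongDual ℝ N.X))) :
    Pmap N (N.dual.dual.dual.l a F) = N.dual.l a (Pmap N F) := by
  refine ContinuousLinearMap.ext fun x => ?_
  exact congrArg F (incl_r N x a).symm

lemma P_r (N : BBim.{u, v} A) (F : StrongDual ℝ (StrongDual ℝ (StrongDual ℝ N.X))) (a : A) :
    Pmap N (N.dual.dual.dual.r F a) = N.dual.r (Pmap N F) a := by
  refine ContinuousLinearMap.ext fun x => ?_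
  exact congrArg F (incl_l N a x).symm

lemma step (N : BBim.{u, v} A) (h : N.dual.dual.dual.H1Zero) : N.dual.H1Zero := by
  intro D hD
  set j : (N.dual).X →L[ℝ] (N.dual.dual.dual).X :=
    inclusionInDoubleDual ℝ (N.dual).X with hj
  have hder : N.dual.dual.dual.IsDer (j.comp D) := by
    intro a b
    change j (D (a * b)) = N.dual.dual.dual.l a (j (D b)) + N.dual.dual.dual.r (j (D a)) b
    rw [hD a b, map_add, hj]
    exact congrArg₂ (· + ·) (incl_l N.dual a (D b)) (incl_r N.dual (D a) b)
  obtain ⟨F, hF⟩ := h _ hder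
  refine ⟨Pmap N F, fun a => ?_⟩
  have h2 := congrArg (Pmap N) (hF a)
  rw [map_sub, P_l N a F, P_r N F a] at h2
  rw [← h2]
  exact (P_incl N (D a)).symm

/-- if `H¹(A, B⁽ⁿ⁺²⁾) = 0` then `H¹(A, B⁽ⁿ⁾) = 0` (for `n ≥ 1`). -/
theorem stmt12 (A : Type u) [NonUnitalNormedRing A] [NormedSpace ℝ A]
    [IsScalarTower ℝ A A] [SMulCommClass ℝ A A] [CompleteSpace A]
    (B : Type v) [NormedAddCommGroup B] [NormedSpace ℝ B] [CompleteSpace B]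
    (l : A →L[ℝ] B →L[ℝ] B) (r : B →L[ℝ] A →L[ℝ] B)
    (hl : ∀ (a b : A) (x : B), l (a * b) x = l a (l b x))
    (hr : ∀ (x : B) (a b : A), r (r x a) b = r x (a * b))
    (hlr : ∀ (a : A) (x : B) (b : A), r (l a x) b = l a (r x b))
    (n : ℕ) (hn : 1 ≤ n)
    (h : (BBim.iter ⟨B, l, r⟩ (n + 2)).H1Zero) :
    (BBim.iter ⟨B, l, r⟩ n).H1Zero := by
  obtain ⟨m, rfl⟩ : ∃ m, n = m + 1 := ⟨n - 1, (Nat.succ_pred_eq_of_pos hn).symm⟩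
  exact step (BBim.iter ⟨B, l, r⟩ m) h

end
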